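/- For the generalized Friedrichs model 𝒜_μ(k) = [[A₀₀(k), (μ/√2)A₀₁],[(μ/√2)A₀₁*, A₁₁(k)]] acting on ℂ ⊕ L²(T³), a number z ∉ [m(k), M(k)] is an eigenvalue of 𝒜_μ(k) if and only if Δ_μ(k; z) = 0, where Δ_μ(k;z) = w₁(k) − z − (μ²/2)∫_{T³} dt/(w₂(k,t) − z). -/

import Mathlib

open Real Set MeasureTheory

noncomputable def eps (k : Fin 3 → ℝ) : ℝ := ∑ i, (1 - Real.cos (k i))

def T3 : Set (Fin 3 → ℝ) := Set.univ.pi fun _ => Set.Ioc (-π) π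

noncomputable def w2 (k p : Fin 3 → ℝ) : ℝ :=
  eps k + eps (fun i => (k i + p i) / 2) + eps p

noncomputable def mlow (k : Fin 3 → ℝ) : ℝ := sInf (w2 k '' T3)

noncomputable def Mhigh (k : Fin 3 → ℝ) : ℝ := sSup (w2 k '' T3)

noncomputable def nu : Measure (Fin 3 → ℝ) := volume.restrict T3

/-- The Hilbert space ℂ ⊕ L²(T³) of the generalized Friedrichs model. -/
noncomputable abbrev HF := WithLp 2 (ℂ × Lp ℂ 2 nu)

lemma eps_nonneg (k : Fin 3 → ℝ) : 0 ≤ eps k :=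
  Finset.sum_nonneg fun i _ => by nlinarith [Real.cos_le_one (k i)]

lemma eps_le_six (k : Fin 3 → ℝ) : eps k ≤ 6 := by
  have h : ∀ i ∈ Finset.univ, 1 - Real.cos (k i) ≤ 2 := fun i _ => by
    nlinarith [Real.neg_one_le_cos (k i)]
  calc eps k ≤ ∑ _i : Fin 3, (2:ℝ) := Finset.sum_le_sum h
    _ = 6 := by norm_num

lemma T3_measurable : MeasurableSet T3 :=
  MeasurableSet.univ_pi fun _ => measurableSet_Ioc

instance : IsFiniteMeasure nu := by
  constructor
  rw [nu, Measure.restrict_apply_univ, T3, Real.volume_pi_Ioc]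
  exact WithTop.prod_lt_top (fun i _ => ENNReal.ofReal_lt_top)

lemma w2_bounds (k : Fin 3 → ℝ) {p : Fin 3 → ℝ} (hp : p ∈ T3) :
    mlow k ≤ w2 k p ∧ w2 k p ≤ Mhigh k := by
  have hb : ∀ x ∈ w2 k '' T3, eps k ≤ x ∧ x ≤ eps k + 12 := by
    rintro x ⟨q, _, rfl⟩
    unfold w2
    constructor
    · nlinarith [eps_nonneg (fun i => (k i + q i)/2), eps_nonneg q]
    · nlinarith [eps_le_six (fun i => (k i + q i)/2), eps_le_six q]
  constructor
  · exact csInf_le ⟨eps k, fun x hx => (hb x hx).1⟩ ⟨p, hp, rfl⟩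
  · exact le_csSup ⟨eps k + 12, fun x hx => (hb x hx).2⟩ ⟨p, hp, rfl⟩

lemma w2_continuous (k : Fin 3 → ℝ) : Continuous (w2 k) := by
  unfold w2 eps
  fun_prop

theorem stmt14 (k : Fin 3 → ℝ) (μ γ z : ℝ) (hμ : 0 < μ)
    (hz : z ∉ Set.Icc (mlow k) (Mhigh k))
    (A : HF →L[ℂ] HF)
    (hA : ∀ f : HF,
      (WithLp.equiv 2 _ (A f)).1 =
        ((eps k + γ : ℝ) : ℂ) * (WithLp.equiv 2 _ f).1 +
          ((μ / Real.sqrt 2 : ℝ) : ℂ) * ∫ t in T3, (WithLp.equiv 2 _ f).2 t ∧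
      ((WithLp.equiv 2 _ (A f)).2 : (Fin 3 → ℝ) → ℂ) =ᵐ[nu]
        fun p => ((μ / Real.sqrt 2 : ℝ) : ℂ) * (WithLp.equiv 2 _ f).1 +
          (w2 k p : ℂ) * (WithLp.equiv 2 _ f).2 p) :
    (∃ f : HF, f ≠ 0 ∧ A f = (z : ℂ) • f) ↔
      eps k + γ - z - μ ^ 2 / 2 * (∫ t in T3, (w2 k t - z)⁻¹) = 0 := by
  have hres : volume.restrict T3 = nu := rfl
  -- basic constants
  set c : ℝ := μ / Real.sqrt 2 with hc
  have hc0 : c ≠ 0 := by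
    have h2 : Real.sqrt 2 > 0 := Real.sqrt_pos.mpr (by norm_num)
    positivity
  have hcc : c * c = μ ^ 2 / 2 := by
    rw [hc, div_mul_div_comm, Real.mul_self_sqrt (by norm_num : (0:ℝ) ≤ 2)]
    ring
  -- a positive distance from z to the values of w2
  obtain ⟨δ, hδ0, hδ⟩ : ∃ δ > 0, ∀ p ∈ T3, δ ≤ |w2 k p - z| := by
    have hz' : ¬(mlow k ≤ z ∧ z ≤ Mhigh k) := by rwa [Set.mem_Icc] at hz
    rcases not_and_or.mp hz' with h | h
    · refine ⟨mlow k - z, by linarith [lt_of_not_ge h], fun p hp => ?_⟩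
      have := (w2_bounds k hp).1
      rw [abs_of_pos (by linarith [lt_of_not_ge h])]
      linarith
    · refine ⟨z - Mhigh k, by linarith [lt_of_not_ge h], fun p hp => ?_⟩
      have := (w2_bounds k hp).2
      rw [abs_of_neg (by linarith [lt_of_not_ge h])]
      linarith
  have hne : ∀ p ∈ T3, w2 k p - z ≠ 0 := fun p hp h => by
    have := hδ p hp; rw [h, abs_zero] at this; linarith
  have haeT3 : ∀ᵐ p ∂nu, p ∈ T3 := ae_restrict_mem T3_measurable
  -- the real resolvent-type integrand
  set gR : (Fin 3 → ℝ) → ℝ := fun p => (w2 k p - z)⁻¹ with hgR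
  have hgRmeas : Measurable gR := ((w2_continuous k).measurable.sub measurable_const).inv
  have hgRbdd : ∀ᵐ p ∂nu, ‖gR p‖ ≤ δ⁻¹ := by
    filter_upwards [haeT3] with p hp
    rw [Real.norm_eq_abs, hgR, abs_inv]
    exact inv_anti₀ hδ0 (hδ p hp)
  have hgRint : Integrable gR nu :=
    memLp_one_iff_integrable.mp
      (MemLp.of_bound hgRmeas.aestronglyMeasurable δ⁻¹ hgRbdd)
  -- the complex version
  set gC : (Fin 3 → ℝ) → ℂ := fun p => ((w2 k p : ℂ) - (z : ℂ))⁻¹ with hgC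
  have hgC_eq : ∀ p, gC p = ((gR p : ℝ) : ℂ) := fun p => by
    rw [hgC, hgR]; push_cast; ring
  have hgCmemℒp : ∀ q : ENNReal, MemLp gC q nu := by
    intro q
    refine MemLp.of_bound ?_ δ⁻¹ ?_
    · exact (Complex.measurable_ofReal.comp hgRmeas).aestronglyMeasurable.congr
        (Filter.Eventually.of_forall fun p => (hgC_eq p).symm)
    · filter_upwards [hgRbdd] with p hp
      rw [hgC_eq p, Complex.norm_real]
      exact hp
  have hIC : (∫ t in T3, gC t) = ((∫ t in T3, gR t : ℝ) : ℂ) := by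
    rw [show (∫ t in T3, gC t) = ∫ t in T3, ((gR t : ℝ) : ℂ) from
      integral_congr_ae (Filter.Eventually.of_forall fun p => hgC_eq p)]
    exact integral_ofReal
  have hneC : ∀ p ∈ T3, ((w2 k p : ℂ) - (z : ℂ)) ≠ 0 := by
    intro p hp h
    apply hne p hp
    have : ((w2 k p - z : ℝ) : ℂ) = 0 := by push_cast; exact h
    exact_mod_cast this
  constructor
  · rintro ⟨f, hf0, hfe⟩
    obtain ⟨h1, h2⟩ := hA f
    set f0 : ℂ := (WithLp.equiv 2 _ f).1 with hf0def
    set f1 := (WithLp.equiv 2 _ f).2 with hf1def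
    -- from the eigenvalue equation, second component:
    have he2 : ((WithLp.equiv 2 _ (A f)).2 : (Fin 3 → ℝ) → ℂ) =ᵐ[nu]
        fun p => (z : ℂ) * f1 p := by
      rw [hfe, show ∀ x : HF, WithLp.equiv 2 (ℂ × Lp ℂ 2 nu) ((z:ℂ) • x) = (z:ℂ) • WithLp.equiv 2 (ℂ × Lp ℂ 2 nu) x from fun _ => rfl]
      filter_upwards [Lp.coeFn_smul (z : ℂ) f1] with p hp
      exact hp
    have hf1ae : (f1 : (Fin 3 → ℝ) → ℂ) =ᵐ[nu] fun p => -(c : ℂ) * f0 * gC p := by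
      filter_upwards [h2, he2, haeT3] with p hp2 hpe hpT3
      have h3 : (c : ℂ) * f0 + (w2 k p : ℂ) * f1 p = (z : ℂ) * f1 p := by
        rw [← hpe]; rw [hp2]
      have h4 := hneC p hpT3
      have h5 : ((w2 k p : ℂ) - z) * ((w2 k p : ℂ) - z)⁻¹ = 1 := mul_inv_cancel₀ h4
      show (f1 : (Fin 3 → ℝ) → ℂ) p = -(c:ℂ) * f0 * ((w2 k p : ℂ) - z)⁻¹
      linear_combination ((w2 k p : ℂ) - z)⁻¹ * h3 + (-((f1 : (Fin 3 → ℝ) → ℂ) p)) * h5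
    -- z * f0 from first component
    have he1 : (z : ℂ) * f0 = ((eps k + γ : ℝ) : ℂ) * f0 + (c : ℂ) * ∫ t in T3, f1 t := by
      rw [← h1, hfe, show ∀ x : HF, WithLp.equiv 2 (ℂ × Lp ℂ 2 nu) ((z:ℂ) • x) = (z:ℂ) • WithLp.equiv 2 (ℂ × Lp ℂ 2 nu) x from fun _ => rfl]
      rfl
    have hint : (∫ t in T3, (f1 : (Fin 3 → ℝ) → ℂ) t) = -(c : ℂ) * f0 * ∫ t in T3, gC t := by
      rw [hres, integral_congr_ae hf1ae, integral_const_mul]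
    -- f0 ≠ 0
    have hf0ne : f0 ≠ 0 := by
      intro h0
      apply hf0
      have hf10 : f1 = 0 := by
        apply Lp.ext
        filter_upwards [hf1ae, Lp.coeFn_zero ℂ 2 nu] with p hp hp0
        rw [hp, hp0, h0]
        simp
      apply (WithLp.equiv 2 _).injective
      rw [show WithLp.equiv 2 (ℂ × Lp ℂ 2 nu) 0 = 0 from rfl]
      exact Prod.ext (by rw [← hf0def, h0]; rfl) (by rw [← hf1def, hf10]; rfl)
    -- conclude
    have key : ((eps k + γ - z - μ ^ 2 / 2 * (∫ t in T3, gR t) : ℝ) : ℂ) = 0 := by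
      have hmain : f0 * ((eps k + γ - z - μ ^ 2 / 2 * (∫ t in T3, gR t) : ℝ) : ℂ) = 0 := by
        rw [hint, hIC] at he1
        have hccC : ((c:ℝ):ℂ) * ((c:ℝ):ℂ) = ((μ^2/2 : ℝ) : ℂ) := by
          rw [← Complex.ofReal_mul, hcc]
        push_cast
        push_cast at he1 hccC
        linear_combination -he1 + hccC * (∫ t in T3, gR t : ℝ) * f0
      rcases mul_eq_zero.mp hmain with h | h
      · exact absurd h hf0ne
      · exact h
    exact_mod_cast key
  · intro hΔ
    -- build the eigenvector
    set f1fun : (Fin 3 → ℝ) → ℂ := fun p => -(c : ℂ) * gC p with hf1fun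
    have hmem : MemLp f1fun 2 nu := ((hgCmemℒp 2).const_mul (-(c:ℂ)))
    set f1 : Lp ℂ 2 nu := hmem.toLp f1fun with hf1L
    set f : HF := (WithLp.equiv 2 _).symm (1, f1) with hfdef
    have hfeq : (WithLp.equiv 2 _ f) = (1, f1) := by
      rw [hfdef, Equiv.apply_symm_apply]
    refine ⟨f, ?_, ?_⟩
    · intro h0
      have h1 : ((WithLp.equiv 2 _ f).1 : ℂ) = 0 := by rw [h0, show WithLp.equiv 2 (ℂ × Lp ℂ 2 nu) 0 = 0 from rfl]; rfl
      rw [hfeq] at h1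
      simp at h1
    · obtain ⟨h1, h2⟩ := hA f
      have hintf1 : (∫ t in T3, (f1 : (Fin 3 → ℝ) → ℂ) t) = -(c : ℂ) * ∫ t in T3, gC t := by
        rw [hres, integral_congr_ae hmem.coeFn_toLp, hf1fun, integral_const_mul]
      apply (WithLp.equiv 2 _).injective
      rw [show ∀ x : HF, WithLp.equiv 2 (ℂ × Lp ℂ 2 nu) ((z:ℂ) • x) = (z:ℂ) • WithLp.equiv 2 (ℂ × Lp ℂ 2 nu) x from fun _ => rfl]
      apply Prod.ext
      · show (WithLp.equiv 2 _ (A f)).1 = (z : ℂ) * (WithLp.equiv 2 _ f).1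
        rw [h1, hfeq, hintf1, hIC]
        show ((eps k + γ : ℝ) : ℂ) * 1 + ((c:ℝ):ℂ) * (-((c:ℝ):ℂ) * _) = (z:ℂ) * 1
        have hccC : ((c:ℝ):ℂ) * ((c:ℝ):ℂ) = ((μ^2/2 : ℝ) : ℂ) := by
          rw [← Complex.ofReal_mul, hcc]
        have hΔC : ((eps k + γ - z - μ ^ 2 / 2 * (∫ t in T3, gR t) : ℝ) : ℂ) = 0 := by
          rw [hΔ]; simp
        push_cast at hccC hΔC ⊢
        linear_combination hΔC - hccC * ((∫ t in T3, gR t : ℝ) : ℂ)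
      · show (WithLp.equiv 2 _ (A f)).2 = (z : ℂ) • (WithLp.equiv 2 _ f).2
        apply Lp.ext
        rw [hfeq] at h2 ⊢
        filter_upwards [h2, Lp.coeFn_smul (z:ℂ) f1, hmem.coeFn_toLp, haeT3] with p hp2 hps hpt hpT3
        rw [hp2, hps]
        show (c:ℂ) * 1 + (w2 k p : ℂ) * (f1 : (Fin 3 → ℝ) → ℂ) p = ((z:ℂ) • (f1 : (Fin 3 → ℝ) → ℂ)) p
        show _ = (z:ℂ) * (f1 : (Fin 3 → ℝ) → ℂ) p
        rw [hpt, hf1fun]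
        have h4 := hneC p hpT3
        have h5 : ((w2 k p : ℂ) - z) * ((w2 k p : ℂ) - z)⁻¹ = 1 := mul_inv_cancel₀ h4
        show (c:ℂ) * 1 + (w2 k p : ℂ) * (-(c:ℂ) * ((w2 k p : ℂ) - z)⁻¹) = (z:ℂ) * (-(c:ℂ) * ((w2 k p : ℂ) - z)⁻¹)
        linear_combination (-((c:ℝ):ℂ)) * h5
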